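/- (Świerczkowski's partition lemma) Fix n ≥ 3 and a finite set S. Suppose to every partition δ of S into at most n blocks is assigned a block φδ of δ, such that whenever δ refines δ' (each block of δ is contained in a block of δ'), the block φδ is contained in φδ'. Then the intersection of all the blocks φδ, over all partitions δ of S into at most n blocks, is nonempty. -/

import Mathlib

/-- Variable `i` is essential in `f`. -/
def EssAt {A B : Type*} {n : ℕ} (f : (Fin n → A) → B) (i : Fin n) : Prop :=
  ∃ a b : Fin n → A, (∀ j, j ≠ i → a j = b j) ∧ f a ≠ f b

/-- The essential arity of `f`: the number of essential variables. -/
noncomputable def essArity {A B : Type*} {n : ℕ} (f : (Fin n → A) → B) : ℕ :=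
  Set.ncard {i : Fin n | EssAt f i}

/-- `A^n_=`: tuples with at least two equal coordinates (all of `A` when `n = 1`). -/
def Aneq (A : Type*) (n : ℕ) : Set (Fin n → A) :=
  {a | n = 1 ∨ ∃ i j : Fin n, i ≠ j ∧ a i = a j}

/-- Variable `i` is essential in the restriction of `f` to `S` (witnesses must lie in `S`). -/
def EssAtOn {A B : Type*} {n : ℕ} (f : (Fin n → A) → B) (S : Set (Fin n → A)) (i : Fin n) : Prop :=
  ∃ a b : Fin n → A, a ∈ S ∧ b ∈ S ∧ (∀ j, j ≠ i → a j = b j) ∧ f a ≠ f b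

/-- Essential arity of the restriction of `f` to `S`. -/
noncomputable def essArityOn {A B : Type*} {n : ℕ} (f : (Fin n → A) → B)
    (S : Set (Fin n → A)) : ℕ :=
  Set.ncard {i : Fin n | EssAtOn f S i}

/-- `g` is a support of `f`: they agree on `A^n_=`. -/
def IsSupport {A B : Type*} {n : ℕ} (f g : (Fin n → A) → B) : Prop :=
  ∀ a ∈ Aneq A n, g a = f a

/-- The quasi-arity of `f`: minimum essential arity of a support of `f`. -/
noncomputable def qarity {A B : Type*} {n : ℕ} (f : (Fin n → A) → B) : ℕ :=
  sInf {m | ∃ g : (Fin n → A) → B, IsSupport f g ∧ essArity g = m}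

/-- The variable identification minor `f_{i ← j}`: substitute `x_j` for `x_i`. -/
def idMinor {A B : Type*} {n : ℕ} (f : (Fin n → A) → B) (i j : Fin n) :
    (Fin n → A) → B :=
  fun a => f (Function.update a i (a j))

/-- The arity gap of `f`: minimum of `ess f - ess f_{i←j}` over pairs of distinct
essential variables. -/
noncomputable def arityGap {A B : Type*} {n : ℕ} (f : (Fin n → A) → B) : ℕ :=
  sInf {d | ∃ i j : Fin n, i ≠ j ∧ EssAt f i ∧ EssAt f j ∧
    d = essArity f - essArity (idMinor f i j)}


section SwierczkowskiAux

variable {S : Type*}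

theorem swNonempty_of_mem_classes {r : Setoid S} {B : Set S} (h : B ∈ r.classes) :
    B.Nonempty := by
  obtain ⟨y, rfl⟩ := h
  exact ⟨y, r.refl' y⟩

theorem swClasses_finite [Finite S] (r : Setoid S) : r.classes.Finite := Set.toFinite _

theorem swRel_of_mem {r : Setoid S} {B : Set S} (hB : B ∈ r.classes) {x y : S}
    (hx : x ∈ B) (hy : y ∈ B) : r x y := by
  obtain ⟨c, rfl⟩ := hB
  exact r.trans' hx (r.symm' hy)

theorem swClass_eq {r : Setoid S} {B : Set S} (hB : B ∈ r.classes) {x : S} (hx : x ∈ B) :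
    B = {a | r a x} :=
  Setoid.eq_of_mem_classes hB hx (r.mem_classes x) (r.refl' x)

theorem swNcard_classes_mono [Finite S] {r s : Setoid S} (h : r ≤ s) :
    s.classes.ncard ≤ r.classes.ncard := by
  have hsub : s.classes ⊆ (fun C => {x | ∃ c ∈ C, s x c}) '' r.classes := by
    rintro B ⟨y, rfl⟩
    refine ⟨{x | r x y}, r.mem_classes y, ?_⟩
    ext x
    simp only [Set.mem_setOf_eq]
    constructor
    · rintro ⟨c, hc, hxc⟩
      exact s.trans' hxc (h hc)
    · intro hxy
      exact ⟨y, r.refl' y, hxy⟩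
  calc s.classes.ncard ≤ _ :=
        Set.ncard_le_ncard hsub ((swClasses_finite r).image _)
    _ ≤ r.classes.ncard := Set.ncard_image_le (swClasses_finite r)

theorem swMem_classes_sup {r s : Setoid S} {B : Set S} (hr : B ∈ r.classes)
    (hs : B ∈ s.classes) : B ∈ (r ⊔ s).classes := by
  obtain ⟨b, hb⟩ := swNonempty_of_mem_classes hr
  have step : ∀ (t : Setoid S), B ∈ t.classes → ∀ x y : S, t x y → (x ∈ B ↔ y ∈ B) := by
    rintro t ⟨c, rfl⟩ x y hxy
    constructor
    · intro hx
      exact t.trans' (t.symm' hxy) hx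
    · intro hy
      exact t.trans' hxy hy
  have key : ∀ x y : S, (r ⊔ s) x y → (x ∈ B ↔ y ∈ B) := by
    intro x y hxy
    rw [Setoid.sup_eq_eqvGen] at hxy
    have hxy' : Relation.EqvGen (fun a b => r a b ∨ s a b) x y := hxy
    clear hxy
    induction hxy' with
    | rel a b h => rcases h with h | h
                   · exact step r hr a b h
                   · exact step s hs a b h
    | refl a => exact Iff.rfl
    | symm a b _ ih => exact ih.symm
    | trans a b c _ _ ih1 ih2 => exact ih1.trans ih2
  have hBeq : B = {x | (r ⊔ s) x b} := by
    ext x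
    constructor
    · intro hx
      exact le_sup_left (α := Setoid S) (swRel_of_mem hr hx hb)
    · intro hx
      exact (key x b hx).mpr hb
  rw [hBeq]
  exact Setoid.mem_classes _ b

/-- Refinement of `ν` splitting off the singleton `{x}`. -/
def swSplit (ν : Setoid S) (x : S) : Setoid S where
  r a b := ν a b ∧ (a = x ↔ b = x)
  iseqv := ⟨fun a => ⟨ν.refl' a, Iff.rfl⟩,
    fun h => ⟨ν.symm' h.1, h.2.symm⟩,
    fun h1 h2 => ⟨ν.trans' h1.1 h2.1, h1.2.trans h2.2⟩⟩

theorem swSplit_rel {ν : Setoid S} {x a b : S} :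
    (swSplit ν x) a b ↔ ν a b ∧ (a = x ↔ b = x) := Iff.rfl

theorem swSplit_le (ν : Setoid S) (x : S) : swSplit ν x ≤ ν := Setoid.le_def.mpr fun h => h.1

theorem swSplit_singleton_mem (ν : Setoid S) (x : S) :
    ({x} : Set S) ∈ (swSplit ν x).classes := by
  have h : {a | (swSplit ν x) a x} = ({x} : Set S) := by
    ext a
    simp only [Set.mem_setOf_eq, swSplit_rel, Set.mem_singleton_iff, iff_true]
    constructor
    · rintro ⟨_, h2⟩; exact h2
    · rintro rfl; exact ⟨ν.refl' a, rfl⟩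
  exact h ▸ Setoid.mem_classes _ x

theorem swSplit_classes_subset (ν : Setoid S) (x : S) :
    (swSplit ν x).classes ⊆ insert ({x} : Set S) ((fun C => C \ {x}) '' ν.classes) := by
  rintro B ⟨y, rfl⟩
  by_cases hy : y = x
  · subst hy
    left
    ext a
    simp only [Set.mem_setOf_eq, swSplit_rel, Set.mem_singleton_iff, iff_true]
    constructor
    · rintro ⟨_, h2⟩; exact h2
    · rintro rfl; exact ⟨ν.refl' a, rfl⟩
  · right
    refine ⟨{a | ν a y}, ν.mem_classes y, ?_⟩
    ext a
    simp only [Set.mem_diff, Set.mem_setOf_eq, swSplit_rel, Set.mem_singleton_iff]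
    constructor
    · rintro ⟨h1, h2⟩
      exact ⟨h1, iff_of_false h2 hy⟩
    · rintro ⟨h1, h2⟩
      exact ⟨h1, fun hax => hy (h2.mp hax)⟩

theorem swSplit_ncard [Finite S] (ν : Setoid S) (x : S) :
    (swSplit ν x).classes.ncard ≤ ν.classes.ncard + 1 := by
  calc (swSplit ν x).classes.ncard
      ≤ (insert ({x} : Set S) ((fun C => C \ {x}) '' ν.classes)).ncard :=
        Set.ncard_le_ncard (swSplit_classes_subset ν x)
          (((swClasses_finite ν).image _).insert _)
    _ ≤ ((fun C => C \ {x}) '' ν.classes).ncard + 1 := Set.ncard_insert_le _ _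
    _ ≤ ν.classes.ncard + 1 := by
        have := Set.ncard_image_le (f := fun C => C \ ({x} : Set S))
          (swClasses_finite ν)
        omega

/-- Coarsening of `ν` merging the classes of `u` and `v`. -/
def swMerge (ν : Setoid S) (u v : S) (huv : ¬ ν u v) : Setoid S where
  r a b := ν a b ∨ (ν a u ∧ ν b v) ∨ (ν a v ∧ ν b u)
  iseqv := by
    refine ⟨fun a => Or.inl (ν.refl' a), ?_, ?_⟩
    · rintro a b (h | ⟨h1, h2⟩ | ⟨h1, h2⟩)
      · exact Or.inl (ν.symm' h)
      · exact Or.inr (Or.inr ⟨h2, h1⟩)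
      · exact Or.inr (Or.inl ⟨h2, h1⟩)
    · rintro a b c (h | ⟨h1, h2⟩ | ⟨h1, h2⟩) (g | ⟨g1, g2⟩ | ⟨g1, g2⟩)
      · exact Or.inl (ν.trans' h g)
      · exact Or.inr (Or.inl ⟨ν.trans' h g1, g2⟩)
      · exact Or.inr (Or.inr ⟨ν.trans' h g1, g2⟩)
      · exact Or.inr (Or.inl ⟨h1, ν.trans' (ν.symm' g) h2⟩)
      · exact absurd (ν.trans' (ν.symm' g1) h2) huv
      · exact Or.inl (ν.trans' h1 (ν.symm' g2))
      · exact Or.inr (Or.inr ⟨h1, ν.trans' (ν.symm' g) h2⟩)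
      · exact Or.inl (ν.trans' h1 (ν.symm' g2))
      · exact absurd (ν.trans' (ν.symm' h2) g1) huv

theorem swMerge_rel {ν : Setoid S} {u v : S} {huv : ¬ ν u v} {a b : S} :
    (swMerge ν u v huv) a b ↔ ν a b ∨ (ν a u ∧ ν b v) ∨ (ν a v ∧ ν b u) := Iff.rfl

theorem swMerge_le (ν : Setoid S) (u v : S) (huv : ¬ ν u v) :
    ν ≤ swMerge ν u v huv := Setoid.le_def.mpr fun h => Or.inl h

theorem swMerge_class_unrelated {ν : Setoid S} {u v : S} {huv : ¬ ν u v} {a : S}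
    (hau : ¬ ν a u) (hav : ¬ ν a v) :
    {b | (swMerge ν u v huv) b a} = {b | ν b a} := by
  ext b
  simp only [Set.mem_setOf_eq, swMerge_rel]
  constructor
  · rintro (h | ⟨h1, h2⟩ | ⟨h1, h2⟩)
    · exact h
    · exact absurd h2 hav
    · exact absurd h2 hau
  · exact fun h => Or.inl h

theorem swMerge_classes_subset (ν : Setoid S) (u v : S) (huv : ¬ ν u v) :
    (swMerge ν u v huv).classes ⊆
      insert ({b | ν b u} ∪ {b | ν b v})
        (ν.classes \ {{b | ν b u}, {b | ν b v}}) := by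
  rintro B ⟨a, rfl⟩
  by_cases hau : ν a u
  · left
    ext b
    simp only [Set.mem_setOf_eq, swMerge_rel, Set.mem_union]
    constructor
    · rintro (h | ⟨h1, h2⟩ | ⟨h1, h2⟩)
      · exact Or.inl (ν.trans' h hau)
      · exact Or.inl h1
      · exact Or.inr h1
    · rintro (h | h)
      · exact Or.inl (ν.trans' h (ν.symm' hau))
      · exact Or.inr (Or.inr ⟨h, hau⟩)
  · by_cases hav : ν a v
    · left
      ext b
      simp only [Set.mem_setOf_eq, swMerge_rel, Set.mem_union]
      constructor
      · rintro (h | ⟨h1, h2⟩ | ⟨h1, h2⟩)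
        · exact Or.inr (ν.trans' h hav)
        · exact Or.inl h1
        · exact Or.inr h1
      · rintro (h | h)
        · exact Or.inr (Or.inl ⟨h, hav⟩)
        · exact Or.inl (ν.trans' h (ν.symm' hav))
    · right
      rw [swMerge_class_unrelated hau hav]
      refine ⟨ν.mem_classes a, ?_⟩
      simp only [Set.mem_insert_iff, Set.mem_singleton_iff]
      rintro (h | h)
      · exact hau (by have : a ∈ {b | ν b a} := ν.refl' a; rw [h] at this; exact this)
      · exact hav (by have : a ∈ {b | ν b a} := ν.refl' a; rw [h] at this; exact this)

theorem swMerge_mem_classes {ν : Setoid S} {u v : S} {huv : ¬ ν u v} {D : Set S}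
    (hD : D ∈ ν.classes) (hDu : D ≠ {b | ν b u}) (hDv : D ≠ {b | ν b v}) :
    D ∈ (swMerge ν u v huv).classes := by
  obtain ⟨a, rfl⟩ := hD
  have hau : ¬ ν a u := by
    intro h
    apply hDu
    ext b
    exact ⟨fun hb => ν.trans' hb h, fun hb => ν.trans' hb (ν.symm' h)⟩
  have hav : ¬ ν a v := by
    intro h
    apply hDv
    ext b
    exact ⟨fun hb => ν.trans' hb h, fun hb => ν.trans' hb (ν.symm' h)⟩
  exact (swMerge_class_unrelated hau hav) ▸ Setoid.mem_classes _ a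

end SwierczkowskiAux

theorem stmt5 {S : Type*} [Fintype S] {n : ℕ} (hn : 3 ≤ n)
    (φ : Setoid S → Set S)
    (hblock : ∀ δ : Setoid S, Set.ncard δ.classes ≤ n → φ δ ∈ δ.classes)
    (hmono : ∀ δ δ' : Setoid S, Set.ncard δ.classes ≤ n → Set.ncard δ'.classes ≤ n →
      δ ≤ δ' → φ δ ⊆ φ δ') :
    ∃ x : S, ∀ δ : Setoid S, Set.ncard δ.classes ≤ n → x ∈ φ δ := by
  classical
  by_cases hS : Nonempty S
  swap
  · have h1 : (⊤ : Setoid S).classes.ncard ≤ n := by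
      have he : (⊤ : Setoid S).classes = ∅ := by
        ext B
        simp only [Set.mem_empty_iff_false, iff_false]
        rintro ⟨y, -⟩
        exact hS ⟨y⟩
      rw [he, Set.ncard_empty]
      omega
    obtain ⟨y, -⟩ := hblock ⊤ h1
    exact absurd ⟨y⟩ hS
  -- S is nonempty
  have htop : (⊤ : Setoid S).classes.ncard ≤ n := by
    have hsub : (⊤ : Setoid S).classes ⊆ {Set.univ} := by
      rintro B ⟨y, rfl⟩
      simp only [Set.mem_singleton_iff]
      ext a
      simp only [Set.mem_setOf_eq, Set.mem_univ, iff_true]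
      exact trivial
    calc (⊤ : Setoid S).classes.ncard ≤ ({Set.univ} : Set (Set S)).ncard :=
          Set.ncard_le_ncard hsub (Set.finite_singleton _)
      _ = 1 := Set.ncard_singleton _
      _ ≤ n := by omega
  have hKne : {k | ∃ δ : Setoid S, δ.classes.ncard ≤ n ∧ (φ δ).ncard = k}.Nonempty :=
    ⟨(φ ⊤).ncard, ⊤, htop, rfl⟩
  obtain ⟨μ₀, hμ₀n, hμ₀card⟩ := Nat.sInf_mem hKne
  have hmin : ∀ δ : Setoid S, δ.classes.ncard ≤ n → (φ μ₀).ncard ≤ (φ δ).ncard := by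
    intro δ hδ
    rw [hμ₀card]
    exact Nat.sInf_le ⟨δ, hδ, rfl⟩
  -- Claim A: if φ μ₀ is a class of δ, then φ δ = φ μ₀
  have claimA : ∀ δ : Setoid S, δ.classes.ncard ≤ n → φ μ₀ ∈ δ.classes → φ δ = φ μ₀ := by
    intro δ hδ hBδ
    have hBμ : φ μ₀ ∈ μ₀.classes := hblock μ₀ hμ₀n
    have hsupmem := swMem_classes_sup hBμ hBδ
    have hsupn : (μ₀ ⊔ δ).classes.ncard ≤ n :=
      le_trans (swNcard_classes_mono le_sup_left) hμ₀n
    obtain ⟨b, hb⟩ := swNonempty_of_mem_classes hBμ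
    have h1 : φ μ₀ ⊆ φ (μ₀ ⊔ δ) := hmono μ₀ _ hμ₀n hsupn le_sup_left
    have h2 : φ (μ₀ ⊔ δ) = φ μ₀ :=
      Setoid.eq_of_mem_classes (hblock _ hsupn) (h1 hb) hsupmem hb
    have h3 : φ δ ⊆ φ μ₀ := by
      have h := hmono δ _ hδ hsupn le_sup_right
      rwa [h2] at h
    obtain ⟨z, hz⟩ := swNonempty_of_mem_classes (hblock δ hδ)
    exact Setoid.eq_of_mem_classes (hblock δ hδ) hz hBδ (h3 hz)
  -- Construction of a coarsening with at most n-1 classes keeping a given class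
  have buildν : ∀ δ : Setoid S, δ.classes.ncard ≤ n → ∀ D ∈ δ.classes,
      ∃ ν : Setoid S, δ ≤ ν ∧ ν.classes.ncard + 1 ≤ n ∧ D ∈ ν.classes := by
    intro δ hδ D hD
    by_cases hcase : δ.classes.ncard + 1 ≤ n
    · exact ⟨δ, le_refl δ, hcase, hD⟩
    · have hfin := swClasses_finite δ
      have hcard : δ.classes.ncard = n := by omega
      have h2 : 1 < (δ.classes \ {D}).ncard := by
        rw [Set.ncard_diff (by simpa using hD) (Set.finite_singleton _),
          Set.ncard_singleton]
        omega
      obtain ⟨C₁, C₂, hC₁, hC₂, hC12⟩ := (Set.one_lt_ncard_iff (hfin.diff)).mp h2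
      have hC₁c : C₁ ∈ δ.classes := hC₁.1
      have hC₂c : C₂ ∈ δ.classes := hC₂.1
      obtain ⟨u, hu⟩ := swNonempty_of_mem_classes hC₁c
      obtain ⟨v, hv⟩ := swNonempty_of_mem_classes hC₂c
      have hCu : C₁ = {b | δ b u} := swClass_eq hC₁c hu
      have hCv : C₂ = {b | δ b v} := swClass_eq hC₂c hv
      have huv : ¬ δ u v := by
        intro h
        exact hC12 (Setoid.eq_of_mem_classes hC₁c hu hC₂c (show u ∈ C₂ by rw [hCv]; exact h))
      refine ⟨swMerge δ u v huv, swMerge_le δ u v huv, ?_, ?_⟩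
      · have hCuv : ({b | δ b u} : Set S) ≠ {b | δ b v} := by
          rw [← hCu, ← hCv]; exact hC12
        have hpairsub : ({{b | δ b u}, {b | δ b v}} : Set (Set S)) ⊆ δ.classes := by
          rintro C hC
          rcases hC with rfl | rfl
          · rw [← hCu]; exact hC₁c
          · rw [← hCv]; exact hC₂c
        have hdiff : (δ.classes \ {{b | δ b u}, {b | δ b v}}).ncard
            = δ.classes.ncard - 2 := by
          rw [Set.ncard_diff hpairsub (Set.toFinite _), Set.ncard_pair hCuv]
        have h3 : (swMerge δ u v huv).classes.ncard
            ≤ (δ.classes \ {{b | δ b u}, {b | δ b v}}).ncard + 1 :=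
          le_trans (Set.ncard_le_ncard (swMerge_classes_subset δ u v huv)
            ((hfin.diff).insert _)) (Set.ncard_insert_le _ _)
        rw [hdiff] at h3
        omega
      · apply swMerge_mem_classes hD
        · rw [← hCu]
          intro h
          exact hC₁.2 (Set.mem_singleton_iff.mpr h.symm)
        · rw [← hCv]
          intro h
          exact hC₂.2 (Set.mem_singleton_iff.mpr h.symm)
  -- Claim B: φ μ₀ is a singleton
  obtain ⟨x, hx⟩ : ∃ x : S, φ μ₀ = {x} := by
    by_contra hno
    push_neg at hno
    have hBcl : φ μ₀ ∈ μ₀.classes := hblock μ₀ hμ₀n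
    obtain ⟨x, hxB⟩ := swNonempty_of_mem_classes hBcl
    obtain ⟨y, hyB, hyx⟩ : ∃ y ∈ φ μ₀, y ≠ x := by
      have hss : ({x} : Set S) ⊂ φ μ₀ :=
        (Set.singleton_subset_iff.mpr hxB).ssubset_of_ne fun h => hno x h.symm
      obtain ⟨y, hy1, hy2⟩ := Set.exists_of_ssubset hss
      exact ⟨y, hy1, by simpa using hy2⟩
    obtain ⟨ν, hμν, hνn, hBν⟩ := buildν μ₀ hμ₀n (φ μ₀) hBcl
    have hφν : φ ν = φ μ₀ := by
      have hsub := hmono μ₀ ν hμ₀n (by omega) hμν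
      exact Setoid.eq_of_mem_classes (hblock ν (by omega)) (hsub hxB) hBν hxB
    have hδn : (swSplit ν x).classes.ncard ≤ n :=
      le_trans (swSplit_ncard ν x) (by omega)
    have hφδsub : φ (swSplit ν x) ⊆ φ μ₀ := by
      have h := hmono (swSplit ν x) ν hδn (by omega) (swSplit_le ν x)
      rwa [hφν] at h
    have hφδmem := swSplit_classes_subset ν x (hblock (swSplit ν x) hδn)
    have hne : φ (swSplit ν x) ≠ φ μ₀ := by
      rcases Set.mem_insert_iff.mp hφδmem with h | ⟨C, -, hCe⟩
      · intro heq
        rw [← heq, h] at hyB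
        exact hyx hyB
      · intro heq
        have hxm : x ∈ φ (swSplit ν x) := heq.symm ▸ hxB
        rw [← hCe] at hxm
        exact hxm.2 rfl
    have hlt := Set.ncard_lt_ncard (hφδsub.ssubset_of_ne hne) (Set.toFinite _)
    exact absurd (hmin (swSplit ν x) hδn) (by omega)
  -- Conclusion
  refine ⟨x, ?_⟩
  intro δ hδ
  have hDcl : {a | δ a x} ∈ δ.classes := Setoid.mem_classes δ x
  have hxD : x ∈ {a | δ a x} := δ.refl' x
  by_cases hDx : {a | δ a x} = ({x} : Set S)
  · have hmem : φ μ₀ ∈ δ.classes := by rw [hx, ← hDx]; exact hDcl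
    rw [claimA δ hδ hmem, hx]
    exact Set.mem_singleton x
  · obtain ⟨ν, hδν, hνn, hDν⟩ := buildν δ hδ {a | δ a x} hDcl
    have hδ'n : (swSplit ν x).classes.ncard ≤ n :=
      le_trans (swSplit_ncard ν x) (by omega)
    have hxδ' : φ μ₀ ∈ (swSplit ν x).classes := by
      rw [hx]; exact swSplit_singleton_mem ν x
    have hφδ' : φ (swSplit ν x) = φ μ₀ := claimA (swSplit ν x) hδ'n hxδ'
    have hxν : x ∈ φ ν := by
      apply hmono (swSplit ν x) ν hδ'n (by omega) (swSplit_le ν x)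
      rw [hφδ', hx]
      exact Set.mem_singleton x
    have hφν : φ ν = {a | δ a x} :=
      Setoid.eq_of_mem_classes (hblock ν (by omega)) hxν hDν hxD
    have hφδsub : φ δ ⊆ {a | δ a x} := by
      have h := hmono δ ν hδ (by omega) hδν
      rwa [hφν] at h
    obtain ⟨z, hz⟩ := swNonempty_of_mem_classes (hblock δ hδ)
    have heq : φ δ = {a | δ a x} :=
      Setoid.eq_of_mem_classes (hblock δ hδ) hz hDcl (hφδsub hz)
    rw [heq]
    exact hxD
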